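/- Superadditivity of the approximate variation: for f : T → X, ε > 0 and t ∈ T, writing T⁻ = T ∩ (−∞,t] and T⁺ = T ∩ [t,∞), one has V_ε(f,T⁻) + V_ε(f,T⁺) ≤ V_ε(f,T). -/

import Mathlib

open Filter Set

noncomputable def jordanVar {X : Type*} [PseudoMetricSpace X] (f : ℝ → X) (S : Set ℝ) : ENNReal :=
  ⨆ (n : ℕ) (t : Fin (n+1) → ℝ) (_ : Monotone t) (_ : ∀ i, t i ∈ S),
    ∑ i : Fin n, edist (f (t i.succ)) (f (t i.castSucc))

noncomputable def appVar {X : Type*} [PseudoMetricSpace X] (ε : ℝ) (f : ℝ → X) (S : Set ℝ) : ENNReal :=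
  ⨅ (g : ℝ → X) (_ : jordanVar g S < ⊤) (_ : ∀ t ∈ S, dist (f t) (g t) ≤ ε), jordanVar g S

lemma jordanVar_eq_eVariationOn {X : Type*} [PseudoMetricSpace X] (f : ℝ → X) (S : Set ℝ) :
    jordanVar f S = eVariationOn f S := by
  apply le_antisymm
  · refine iSup_le fun n => iSup_le fun t => iSup_le fun hmono => iSup_le fun hmem => ?_
    set u : ℕ → ℝ := fun i => t ⟨min i n, Nat.lt_succ_of_le (min_le_right _ _)⟩ with hu
    have humono : Monotone u := fun i j hij => hmono (by simpa using min_le_min hij le_rfl)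
    have humem : ∀ i, u i ∈ S := fun i => hmem _
    have key := eVariationOn.sum_le (f := f) (n := n) humono humem
    refine le_trans (le_of_eq ?_) key
    rw [Fin.sum_univ_eq_sum_range (fun i => edist (f (u (i+1))) (f (u i))) n |>.symm]
    apply Finset.sum_congr rfl
    intro i _
    have h1 : u (i.1 + 1) = t i.succ := by
      simp only [hu]
      congr 1
      exact Fin.ext (by simp [Nat.min_eq_left (Nat.succ_le_of_lt i.2)])
    have h2 : u i.1 = t i.castSucc := by
      simp only [hu]
      congr 1
      exact Fin.ext (by simp [Nat.min_eq_left (le_of_lt (Nat.lt_succ_of_lt i.2))])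
    rw [h1, h2]
  · refine iSup_le fun p => ?_
    obtain ⟨n, u, humono, humem⟩ := p
    set t : Fin (n+1) → ℝ := fun i => u i.1 with ht
    have htmono : Monotone t := fun i j hij => humono hij
    have htmem : ∀ i, t i ∈ S := fun i => humem _
    refine le_trans (le_of_eq ?_) (le_iSup_of_le n (le_iSup_of_le t
      (le_iSup_of_le htmono (le_iSup_of_le htmem le_rfl))))
    rw [← Fin.sum_univ_eq_sum_range (fun i => edist (f (u (i+1))) (f (u i))) n]
    apply Finset.sum_congr rfl
    intro i _
    simp [ht, Fin.succ, Fin.castSucc]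

theorem stmt10 {X : Type*} [PseudoMetricSpace X] (T : Set ℝ) (hT : T.Nonempty)
    (f : ℝ → X) (ε : ℝ) (hε : 0 < ε) (t : ℝ) (ht : t ∈ T) :
    appVar ε f (T ∩ Set.Iic t) + appVar ε f (T ∩ Set.Ici t) ≤ appVar ε f T := by
  refine le_iInf fun g => le_iInf fun hfin => le_iInf fun hdist => ?_
  have hsub1 : T ∩ Set.Iic t ⊆ T := Set.inter_subset_left
  have hsub2 : T ∩ Set.Ici t ⊆ T := Set.inter_subset_left
  have hmono1 : jordanVar g (T ∩ Set.Iic t) ≤ jordanVar g T := by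
    rw [jordanVar_eq_eVariationOn, jordanVar_eq_eVariationOn]
    exact eVariationOn.mono g hsub1
  have hmono2 : jordanVar g (T ∩ Set.Ici t) ≤ jordanVar g T := by
    rw [jordanVar_eq_eVariationOn, jordanVar_eq_eVariationOn]
    exact eVariationOn.mono g hsub2
  have h1 : appVar ε f (T ∩ Set.Iic t) ≤ jordanVar g (T ∩ Set.Iic t) :=
    iInf_le_of_le g (iInf_le_of_le (lt_of_le_of_lt hmono1 hfin)
      (iInf_le_of_le (fun s hs => hdist s (hsub1 hs)) le_rfl))
  have h2 : appVar ε f (T ∩ Set.Ici t) ≤ jordanVar g (T ∩ Set.Ici t) :=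
    iInf_le_of_le g (iInf_le_of_le (lt_of_le_of_lt hmono2 hfin)
      (iInf_le_of_le (fun s hs => hdist s (hsub2 hs)) le_rfl))
  refine le_trans (add_le_add h1 h2) ?_
  rw [jordanVar_eq_eVariationOn, jordanVar_eq_eVariationOn, jordanVar_eq_eVariationOn]
  have hunion : (T ∩ Set.Iic t) ∪ (T ∩ Set.Ici t) = T := by
    rw [← Set.inter_union_distrib_left, Set.Iic_union_Ici, Set.inter_univ]
  calc eVariationOn g (T ∩ Set.Iic t) + eVariationOn g (T ∩ Set.Ici t)
      ≤ eVariationOn g ((T ∩ Set.Iic t) ∪ (T ∩ Set.Ici t)) :=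
        eVariationOn.add_le_union g (fun x hx y hy => le_trans hx.2 hy.2)
    _ = eVariationOn g T := by rw [hunion]
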